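/- Let Φ be irreducible, α a maximal simple root, and γ a (Δ∖{α})-dominant element of E. Then for any τ ∈ W_{Δ∖{α}} and any simple root δ, ((ω̌_α/m_α) − (ω̌_δ/m_δ), γ) ≤ ((ω̌_α/m_α) − (τω̌_δ/m_δ), γ). -/

import Mathlib

open scoped RealInnerProductSpace Classical
open Finset

/-- A crystallographic reduced root system in a real inner product space. -/
structure IsRootSystem {E : Type*} [NormedAddCommGroup E] [InnerProductSpace ℝ E]
    (Φ : Set E) : Prop where
  finite : Φ.Finite
  nonempty : Φ.Nonempty
  zero_not_mem : (0 : E) ∉ Φ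
  span_eq_top : Submodule.span ℝ Φ = ⊤
  reflection_mem : ∀ α ∈ Φ, ∀ β ∈ Φ, β - (2 * ⟪α, β⟫ / ⟪α, α⟫) • α ∈ Φ
  crystallographic : ∀ α ∈ Φ, ∀ β ∈ Φ, ∃ n : ℤ, 2 * ⟪α, β⟫ / ⟪α, α⟫ = (n : ℝ)
  reduced : ∀ α ∈ Φ, ∀ t : ℝ, t • α ∈ Φ → t = 1 ∨ t = -1

variable {E : Type*} [NormedAddCommGroup E] [InnerProductSpace ℝ E] [FiniteDimensional ℝ E]

/-- The orthogonal reflection in the hyperplane orthogonal to `α`. -/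
noncomputable def sref (α : E) : E ≃ₗᵢ[ℝ] E := Submodule.reflection (ℝ ∙ α)ᗮ

/-- The group generated by the reflections `s_α`, `α ∈ B`. -/
noncomputable def reflSubgroup (B : Set E) : Subgroup (E ≃ₗᵢ[ℝ] E) :=
  Subgroup.closure {w | ∃ α ∈ B, w = sref α}

/-- The Weyl group of `Φ`. -/
noncomputable def WeylGroup (Φ : Set E) : Subgroup (E ≃ₗᵢ[ℝ] E) := reflSubgroup Φ

/-- Connectivity of a set of nodes, two nodes being adjacent when they are not
orthogonal (this is the Dynkin-diagram adjacency for simple roots). -/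
def IsConnectedSet (S : Set E) : Prop :=
  ∀ x ∈ S, ∀ y ∈ S, Relation.ReflTransGen (fun a b => a ∈ S ∧ b ∈ S ∧ ⟪a, b⟫ ≠ 0) x y

/-- The connected component of `x` in `S` for the non-orthogonality adjacency. -/
def component (S : Set E) (x : E) : Set E :=
  {y ∈ S | Relation.ReflTransGen (fun a b => a ∈ S ∧ b ∈ S ∧ ⟪a, b⟫ ≠ 0) x y}

set_option linter.unusedSectionVars false
set_option maxHeartbeats 1000000

lemma sref_apply' (v x : E) : sref v x = x - (2 * ⟪v, x⟫ / ⟪v, v⟫) • v := by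
  have h1 : sref v x = 2 • ((Submodule.starProjection ((ℝ ∙ v)ᗮ) x) : E) - x := Submodule.reflection_apply x
  have h2 : ((Submodule.starProjection ((ℝ ∙ v)ᗮ) x) : E) = x - Submodule.starProjection (ℝ ∙ v) x := by
    simp [Submodule.starProjection_orthogonal]
  have h3 : ((Submodule.starProjection (ℝ ∙ v) x) : E) = (⟪v, x⟫ / ((‖v‖ : ℝ) ^ 2)) • v :=
    Submodule.starProjection_singleton ℝ x
  rw [h1, h2, h3, two_nsmul, real_inner_self_eq_norm_sq]
  module

lemma sref_mul_self (v : E) : sref v * sref v = 1 := by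
  ext x
  show sref v (sref v x) = x
  simp [sref, Submodule.reflection_reflection]

lemma sref_inv (v : E) : (sref v)⁻¹ = sref v :=
  inv_eq_of_mul_eq_one_right (sref_mul_self v)

lemma sref_conj (u : E ≃ₗᵢ[ℝ] E) (v : E) : u * sref v = sref (u v) * u := by
  ext x
  show u (sref v x) = sref (u v) (u x)
  rw [sref_apply', sref_apply', map_sub, map_smul,
    LinearIsometryEquiv.inner_map_map, LinearIsometryEquiv.inner_map_map]

lemma li_aux {Δ : Finset E} (hind : LinearIndependent ℝ (fun x : (Δ : Set E) => (x : E)))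
    (c : E → ℝ) (h : ∑ δ ∈ Δ, c δ • δ = 0) : ∀ δ ∈ Δ, c δ = 0 := by
  intro δ hδ
  have hind' : LinearIndependent ℝ (fun x : {x : E // x ∈ Δ} => (x : E)) := hind
  have hsum : ∑ x ∈ Δ.attach, c (x : E) • (x : E) = 0 := by
    rwa [Finset.sum_attach Δ (fun δ => c δ • δ)]
  exact linearIndependent_iff'.mp hind' Δ.attach (fun i => c (i : E)) hsum ⟨δ, hδ⟩
    (Finset.mem_attach _ _)

lemma rep_aux {Δ : Finset E} {r : E} (h : r ∈ AddSubmonoid.closure (↑Δ : Set E)) :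
    ∃ k : E → ℕ, r = ∑ δ ∈ Δ, (k δ : ℝ) • δ := by
  induction h using AddSubmonoid.closure_induction with
  | mem x hx =>
      refine ⟨fun e => if e = x then 1 else 0, ?_⟩
      have hx' : x ∈ Δ := hx
      rw [Finset.sum_congr rfl (fun δ _ => by
        show ((if δ = x then (1:ℕ) else 0 : ℕ) : ℝ) • δ = if δ = x then δ else 0
        split <;> simp)]
      simp [Finset.sum_ite_eq' Δ x (fun δ => δ), hx']
  | zero => exact ⟨0, by simp⟩
  | add a b _ _ iha ihb =>
      obtain ⟨k1, hk1⟩ := iha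
      obtain ⟨k2, hk2⟩ := ihb
      exact ⟨k1 + k2, by simp [hk1, hk2, add_smul, Finset.sum_add_distrib]⟩


/-- Let `Φ` be irreducible with base `Δ`, highest root `θ = Σ m_α α` and
fundamental coweights `cw α = ω̌_α`, and let `α` be a maximal simple root
(i.e. `(Δ∖{α}) ∪ {α₀}` is connected, the affine node `α₀` being `-θ`).
If `γ` is `(Δ∖{α})`-dominant and `τ ∈ W_{Δ∖{α}}`, then for any simple root `δ`,
`((ω̌_α/m_α) - (ω̌_δ/m_δ), γ) ≤ ((ω̌_α/m_α) - (τω̌_δ/m_δ), γ)`. -/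
theorem nabla_dominant_inequality
    (Φ : Finset E) (hΦ : IsRootSystem (↑Φ : Set E))
    (Δ : Finset E) (hΔΦ : (↑Δ : Set E) ⊆ (↑Φ : Set E))
    (hbase : ∀ β ∈ Φ, β ∈ AddSubmonoid.closure (↑Δ : Set E) ∨
      -β ∈ AddSubmonoid.closure (↑Δ : Set E))
    (hind : LinearIndependent ℝ (fun x : (Δ : Set E) => (x : E)))
    (hirr : IsConnectedSet (↑Δ : Set E))
    (θ : E) (hθ : θ ∈ Φ) (hhigh : ∀ β ∈ Φ, θ - β ∈ AddSubmonoid.closure (↑Δ : Set E))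
    (m : E → ℕ) (hm : θ = ∑ α ∈ Δ, (m α : ℝ) • α) (hmpos : ∀ α ∈ Δ, 0 < m α)
    (cw : E → E) (hcw : ∀ α ∈ Δ, ∀ β ∈ Δ, ⟪cw α, β⟫ = if α = β then 1 else 0)
    (α : E) (hα : α ∈ Δ)
    (hαmax : IsConnectedSet (((↑Δ : Set E) \ {α}) ∪ {-θ}))
    (γ : E) (hγdom : ∀ δ ∈ Δ, δ ≠ α → 0 ≤ ⟪γ, δ⟫)
    (τ : E ≃ₗᵢ[ℝ] E) (hτ : τ ∈ reflSubgroup ((↑Δ : Set E) \ {α}))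
    (δ : E) (hδ : δ ∈ Δ) :
    ⟪(m α : ℝ)⁻¹ • cw α - (m δ : ℝ)⁻¹ • cw δ, γ⟫ ≤
      ⟪(m α : ℝ)⁻¹ • cw α - (m δ : ℝ)⁻¹ • τ (cw δ), γ⟫ := by
  classical
  -- notation
  set pos : E → Prop := fun r => r ∈ AddSubmonoid.closure (↑Δ : Set E) with hposdef
  have hzero : ∀ r ∈ Φ, r ≠ (0 : E) := by
    intro r hr h0
    exact hΦ.zero_not_mem (h0 ▸ (Finset.mem_coe.mpr hr))
  have hΔΦ' : ∀ b ∈ Δ, b ∈ Φ := fun b hb => Finset.mem_coe.mp (hΔΦ (Finset.mem_coe.mpr hb))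
  have hposΔ : ∀ b ∈ Δ, pos b := fun b hb =>
    AddSubmonoid.subset_closure (Finset.mem_coe.mpr hb)
  have hli := li_aux hind
  -- not both positive and negative
  have hnotboth : ∀ r, r ≠ (0 : E) → pos r → pos (-r) → False := by
    intro r hr h1 h2
    obtain ⟨k, hk⟩ := rep_aux h1
    obtain ⟨k', hk'⟩ := rep_aux h2
    have hsum : ∑ δ' ∈ Δ, (((k δ' : ℝ)) + (k' δ' : ℝ)) • δ' = 0 := by
      rw [Finset.sum_congr rfl (fun δ' _ => add_smul _ _ _), Finset.sum_add_distrib, ← hk, ← hk']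
      abel
    have hall := hli _ hsum
    apply hr
    rw [hk]
    refine Finset.sum_eq_zero (fun δ' hδ' => ?_)
    have h0 := hall δ' hδ'
    have : (k δ' : ℝ) = 0 := by
      have h1 := Nat.cast_nonneg (α := ℝ) (k δ')
      have h2 := Nat.cast_nonneg (α := ℝ) (k' δ')
      linarith
    rw [this, zero_smul]
  -- dichotomy
  have hdich : ∀ r ∈ Φ, pos r ∨ pos (-r) := fun r hr => hbase r hr
  -- reflections preserve Φ
  have hsΦ : ∀ b ∈ Δ, ∀ r ∈ Φ, sref b r ∈ Φ := by
    intro b hb r hr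
    rw [sref_apply']
    exact Finset.mem_coe.mp (hΦ.reflection_mem b (hΔΦ (Finset.mem_coe.mpr hb)) r
      (Finset.mem_coe.mpr hr))
  -- key positivity: s_b maps positive roots ≠ b to positive roots
  have hposref : ∀ b ∈ Δ, ∀ r ∈ Φ, pos r → r ≠ b → pos (sref b r) := by
    intro b hb r hrΦ hrpos hrb
    have hsr : sref b r ∈ Φ := hsΦ b hb r hrΦ
    rcases hdich _ hsr with h | h
    · exact h
    exfalso
    obtain ⟨k, hk⟩ := rep_aux hrpos
    obtain ⟨k', hk'⟩ := rep_aux h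
    set c : ℝ := 2 * ⟪b, r⟫ / ⟪b, b⟫ with hc
    have hkey : ∑ δ' ∈ Δ, (((k δ' : ℝ) + (k' δ' : ℝ)) - (if δ' = b then c else 0)) • δ' = 0 := by
      rw [Finset.sum_congr rfl (fun δ' _ => by rw [sub_smul, add_smul])]
      rw [Finset.sum_sub_distrib, Finset.sum_add_distrib, ← hk, ← hk']
      have hb' : ∑ δ' ∈ Δ, (if δ' = b then c else 0) • δ' = c • b := by
        rw [Finset.sum_congr rfl (fun δ' _ => by
          show (if δ' = b then c else 0) • δ' = if δ' = b then c • δ' else 0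
          split <;> simp)]
        simp [Finset.sum_ite_eq' Δ b, hb]
      rw [hb']
      have : -(sref b r) = -(r - c • b) := by rw [sref_apply']
      rw [this]
      abel
    have hall := hli _ hkey
    have hk0 : ∀ δ' ∈ Δ, δ' ≠ b → k δ' = 0 := by
      intro δ' h1 h2
      have h0 := hall δ' h1
      rw [if_neg h2, sub_zero] at h0
      have h1' := Nat.cast_nonneg (α := ℝ) (k δ')
      have h2' := Nat.cast_nonneg (α := ℝ) (k' δ')
      have : (k δ' : ℝ) = 0 := by linarith
      exact_mod_cast this
    have hrkb : r = (k b : ℝ) • b := by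
      rw [hk, Finset.sum_eq_single b]
      · intro δ' h1 h2
        rw [hk0 δ' h1 h2]
        simp
      · intro hbn; exact absurd hb hbn
    have hred := hΦ.reduced b (hΔΦ (Finset.mem_coe.mpr hb)) (k b : ℝ)
      (by rw [← hrkb]; exact Finset.mem_coe.mpr hrΦ)
    rcases hred with h1 | h1
    · apply hrb; rw [hrkb, h1, one_smul]
    · have := Nat.cast_nonneg (α := ℝ) (k b); linarith
  -- the real nonnegative cone
  set PosR : E → Prop := fun x => ∃ k : E → ℝ, (∀ δ' ∈ Δ, 0 ≤ k δ') ∧ x = ∑ δ' ∈ Δ, k δ' • δ'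
    with hPosRdef
  have hPos0 : PosR 0 := ⟨0, fun _ _ => le_refl _, by simp⟩
  have hPosaddCone : ∀ x r (c : ℝ), PosR x → pos r → 0 ≤ c → PosR (x + c • r) := by
    rintro x r c ⟨kx, hkx0, hkx⟩ hr hc
    obtain ⟨k, hk⟩ := rep_aux hr
    refine ⟨fun δ' => kx δ' + c * (k δ' : ℝ), fun δ' hδ' => add_nonneg (hkx0 δ' hδ') (mul_nonneg hc (Nat.cast_nonneg _)), ?_⟩
    rw [hkx, hk, Finset.smul_sum]
    rw [← Finset.sum_add_distrib]
    refine Finset.sum_congr rfl (fun δ' _ => ?_)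
    rw [add_smul, smul_smul]
  have hPosinner : ∀ x, PosR x → 0 ≤ ⟪cw δ, x⟫ := by
    rintro x ⟨k, hk0, hk⟩
    rw [hk, inner_sum]
    refine Finset.sum_nonneg (fun δ' hδ' => ?_)
    rw [real_inner_smul_right, hcw δ hδ δ' hδ']
    have := hk0 δ' hδ'
    split <;> nlinarith

  -- application of products
  have hmulapp : ∀ (f g : E ≃ₗᵢ[ℝ] E) (x : E), (f * g) x = f (g x) := fun f g x => rfl
  -- products of simple reflections preserve Φ
  have hprodΦ : ∀ l : List (E ≃ₗᵢ[ℝ] E), (∀ w ∈ l, ∃ b, b ∈ Δ ∧ w = sref b) →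
      ∀ r ∈ Φ, l.prod r ∈ Φ := by
    intro l
    induction l with
    | nil => intro _ r hr; simpa using hr
    | cons w t ih =>
        intro hmem r hr
        obtain ⟨b, hb, rfl⟩ := hmem w (List.mem_cons_self (a := w) (l := t))
        have ht := fun w hw => hmem w (List.mem_cons_of_mem _ hw)
        rw [List.prod_cons, hmulapp]
        exact hsΦ b hb _ (ih ht r hr)
  -- deletion lemma
  have hDL : ∀ l : List (E ≃ₗᵢ[ℝ] E), (∀ w ∈ l, ∃ b, b ∈ Δ ∧ w = sref b) →
      ∀ b ∈ Δ, pos (-(l.prod b)) →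
      ∃ l' : List (E ≃ₗᵢ[ℝ] E), (∀ w ∈ l', w ∈ l) ∧ l'.length + 1 ≤ l.length ∧
        l'.prod = l.prod * sref b := by
    intro l
    induction l with
    | nil =>
        intro _ b hb hneg
        exfalso
        have : (List.prod [] : E ≃ₗᵢ[ℝ] E) b = b := by simp
        rw [this] at hneg
        exact hnotboth b (hzero b (hΔΦ' b hb)) (hposΔ b hb) hneg
    | cons w t ih =>
        intro hmem b hb hneg
        obtain ⟨a, ha, rfl⟩ := hmem w (List.mem_cons_self (a := w) (l := t))
        have htmem := fun w hw => hmem w (List.mem_cons_of_mem _ hw)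
        have hr : t.prod b ∈ Φ := hprodΦ t htmem b (hΔΦ' b hb)
        have hnegc : pos (-((sref a) (t.prod b))) := by
          rw [List.prod_cons, hmulapp] at hneg
          exact hneg
        rcases hdich _ hr with hp | hn
        · -- t.prod b is positive, so it must equal a
          have heq : t.prod b = a := by
            by_contra hne
            have hposr := hposref a ha (t.prod b) hr hp hne
            exact hnotboth _ (hzero _ (hsΦ a ha _ hr)) hposr hnegc
          refine ⟨t, fun w hw => List.mem_cons_of_mem _ hw, by simp, ?_⟩
          have hcj : t.prod * sref b = sref (t.prod b) * t.prod := sref_conj t.prod b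
          rw [List.prod_cons, mul_assoc, hcj, heq, ← mul_assoc, sref_mul_self, one_mul]
        · obtain ⟨l', h1, h2, h3⟩ := ih htmem b hb hn
          refine ⟨sref a :: l', ?_, by simpa using h2, ?_⟩
          · intro w hw
            rcases List.mem_cons.mp hw with rfl | hw
            · exact List.mem_cons_self
            · exact List.mem_cons_of_mem _ (h1 w hw)
          · rw [List.prod_cons, List.prod_cons, h3, mul_assoc]
  -- main lemma: γ - wγ lies in the nonnegative cone
  have hML : ∀ n : ℕ, ∀ l : List (E ≃ₗᵢ[ℝ] E), l.length ≤ n →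
      (∀ w ∈ l, ∃ b, b ∈ Δ ∧ b ≠ α ∧ w = sref b) → PosR (γ - l.prod γ) := by
    intro n
    induction n with
    | zero =>
        intro l hl _
        have : l = [] := List.eq_nil_of_length_eq_zero (Nat.le_zero.mp hl)
        subst this
        simpa using hPos0
    | succ n ih =>
        intro l hlen hmem
        rcases List.eq_nil_or_concat l with rfl | ⟨t, w, rfl⟩
        · simpa using hPos0
        obtain ⟨b, hbΔ, hbα, hw⟩ := hmem w (by simp [List.concat_eq_append])
        subst hw
        have htmem : ∀ w ∈ t, ∃ b, b ∈ Δ ∧ b ≠ α ∧ w = sref b :=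
          fun w hw => hmem w (by simp [List.concat_eq_append, hw])
        have htmemΔ : ∀ w ∈ t, ∃ b, b ∈ Δ ∧ w = sref b := by
          intro w hw; obtain ⟨b, h1, _, h3⟩ := htmem w hw; exact ⟨b, h1, h3⟩
        have hlent : t.length ≤ n := by
          have := hlen
          simp only [List.concat_eq_append, List.length_append, List.length_cons,
            List.length_nil] at this
          omega
        have hprodeq : (t.concat (sref b)).prod = t.prod * sref b := by
          simp [List.concat_eq_append]
        have hub : t.prod b ∈ Φ := hprodΦ t htmemΔ b (hΔΦ' b hbΔ)
        rcases hdich _ hub with hp | hn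
        · set c : ℝ := 2 * ⟪b, γ⟫ / ⟪b, b⟫ with hc
          have hc0 : 0 ≤ c := by
            apply div_nonneg
            · have := hγdom b hbΔ hbα
              rw [real_inner_comm] at this
              linarith
            · exact real_inner_self_nonneg
          have happ : (t.prod * sref b) γ = t.prod γ - c • (t.prod b) := by
            rw [hmulapp, sref_apply', map_sub, map_smul]
          have hdecomp : γ - (t.prod * sref b) γ = (γ - t.prod γ) + c • (t.prod b) := by
            rw [happ]; abel
          rw [hprodeq, hdecomp]
          exact hPosaddCone _ _ _ (ih t hlent htmem) hp hc0
        · obtain ⟨l', h1, h2, h3⟩ := hDL t htmemΔ b hbΔ hn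
          rw [hprodeq, ← h3]
          exact ih l' (by omega) (fun w hw => htmem w (h1 w hw))
  -- extract a word for τ⁻¹
  have hτinv : τ⁻¹ ∈ reflSubgroup ((↑Δ : Set E) \ {α}) := inv_mem hτ
  have hτmon : τ⁻¹ ∈ Submonoid.closure
      ({w | ∃ a ∈ (↑Δ : Set E) \ {α}, w = sref a} ∪ {w | ∃ a ∈ (↑Δ : Set E) \ {α}, w = sref a}⁻¹) := by
    rw [← Subgroup.closure_toSubmonoid]
    exact hτinv
  obtain ⟨l, hlmem, hlprod⟩ := Submonoid.exists_list_of_mem_closure hτmon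
  have hlmem' : ∀ w ∈ l, ∃ b, b ∈ Δ ∧ b ≠ α ∧ w = sref b := by
    intro w hw
    rcases hlmem w hw with h | h
    · obtain ⟨a, ha, rfl⟩ := h
      exact ⟨a, Finset.mem_coe.mp ha.1, ha.2, rfl⟩
    · rw [Set.mem_inv] at h
      obtain ⟨a, ha, hws⟩ := h
      refine ⟨a, Finset.mem_coe.mp ha.1, ha.2, ?_⟩
      rw [← sref_inv, ← hws, inv_inv]
  have hPosKey : PosR (γ - τ⁻¹ γ) := by
    have := hML l.length l le_rfl hlmem'
    rwa [hlprod] at this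
  have hip : 0 ≤ ⟪cw δ, γ - τ⁻¹ γ⟫ := hPosinner _ hPosKey
  have hττ : τ (τ⁻¹ γ) = γ := by
    have : (τ * τ⁻¹) γ = γ := by rw [mul_inv_cancel]; rfl
    rwa [hmulapp] at this
  have hmain : ⟪τ (cw δ), γ⟫ ≤ ⟪cw δ, γ⟫ := by
    have h1 : ⟪τ (cw δ), γ⟫ = ⟪cw δ, τ⁻¹ γ⟫ := by
      conv_lhs => rw [← hττ]
      rw [LinearIsometryEquiv.inner_map_map]
    rw [inner_sub_right] at hip
    linarith
  -- final computation
  rw [inner_sub_left, inner_sub_left, real_inner_smul_left, real_inner_smul_left,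
    real_inner_smul_left]
  have hminv : (0:ℝ) ≤ ((m δ : ℝ))⁻¹ := by positivity
  nlinarith [mul_le_mul_of_nonneg_left hmain hminv]
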